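/- Let k be a positive integer, μ ∈ ℝ, σ² > 0, and let H_1, …, H_k be i.i.d. lognormal random variables with parameters μ and σ² (i.e. log H_i is Gaussian with mean μ and variance σ²). Let S = Σ_{i=1}^{k} H_i. Then lim_{x→0+} log P(S ≤ x) / (log x)² = −k/(2σ²). -/

import Mathlib

open MeasureTheory ProbabilityTheory Real Filter
open scoped ProbabilityTheory ENNReal NNReal
open Set
open scoped Topology

lemma expIntegral_Iic (a y : ℝ) (ha : 0 < a) :
    ∫ x in Set.Iic y, Real.exp (a * (x - y)) = 1 / a := by
  have hfun2 : ∀ x, Real.exp (a * (x - y)) = Real.exp (a * x) * Real.exp (-(a * y)) := by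
    intro x; rw [← Real.exp_add]; ring_nf
  simp_rw [hfun2]
  rw [integral_mul_const]
  have key : ∫ x in Set.Iic y, Real.exp (a * x) = Real.exp (a * y) / a := by
    have h2 : ∫ x in Set.Iic y, (fun t : ℝ => Real.exp (-(a * t))) (-x)
        = ∫ x in Set.Ioi (-y), Real.exp (-(a * x)) := by
      exact integral_comp_neg_Iic y (fun t : ℝ => Real.exp (-(a * t)))
    have h2' : ∫ x in Set.Iic y, Real.exp (a * x)
        = ∫ x in Set.Ioi (-y), Real.exp (-(a * x)) := by
      rw [← h2]
      refine setIntegral_congr_fun measurableSet_Iic fun x _ => ?_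
      simp only [mul_neg, neg_neg]
    have h3 := integral_comp_mul_left_Ioi (fun t => Real.exp (-t)) (-y) ha
    simp only [smul_eq_mul] at h3
    rw [h2', h3, integral_exp_neg_Ioi, mul_neg, neg_neg]
    ring
  rw [key, div_mul_eq_mul_div, ← Real.exp_add]
  simp

lemma expIntegrableOn (a y : ℝ) (ha : 0 < a) :
    IntegrableOn (fun x => Real.exp (a * (x - y))) (Set.Iic y) := by
  have h1 : IntegrableOn (fun x => Real.exp (-a * x)) (Set.Ici (-y)) :=
    (integrableOn_Ici_iff_integrableOn_Ioi (f := fun x => Real.exp (-a * x)) (b := -y)).mpr (exp_neg_integrableOn_Ioi _ ha)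
  have h2 := (MeasurePreserving.integrableOn_comp_preimage
    (Measure.measurePreserving_neg (volume : Measure ℝ))
    (Homeomorph.neg ℝ).measurableEmbedding).2 h1
  have h3 : IntegrableOn (fun x => Real.exp (a * x)) (Set.Iic y) := by
    have hs : (fun x : ℝ => -x) ⁻¹' Set.Ici (-y) = Set.Iic y := by
      ext x; simp
    have hfun : ((fun x => Real.exp (-a * x)) ∘ (fun x : ℝ => -x))
        = fun x => Real.exp (a * x) := by
      funext x; simp [Function.comp]
    rwa [hs, hfun] at h2
  have h4 := h3.mul_const (Real.exp (-(a * y)))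
  have hfun2 : (fun x => Real.exp (a * x) * Real.exp (-(a * y)))
      = fun x => Real.exp (a * (x - y)) := by
    funext x; rw [← Real.exp_add]; ring_nf
  rwa [hfun2] at h4

lemma gaussF_upper (μ : ℝ) (v : ℝ≥0) (hv : 0 < v) {y : ℝ} (hy : y ≤ μ - 1) :
    ∫ x in Set.Iic y, gaussianPDFReal μ v x ≤ gaussianPDFReal μ v y * v := by
  have hv' : (0:ℝ) < v := hv
  set a : ℝ := (μ - y) / v with ha_def
  have ha : 0 < a := by apply div_pos (by linarith) hv'
  have hbound : ∀ x ∈ Set.Iic y, gaussianPDFReal μ v x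
      ≤ gaussianPDFReal μ v y * Real.exp (a * (x - y)) := by
    intro x _
    unfold gaussianPDFReal
    conv_rhs => rw [mul_assoc, ← Real.exp_add]
    have hCpos : (0:ℝ) < (Real.sqrt (2 * π * v))⁻¹ := by
      rw [inv_pos]; apply Real.sqrt_pos.mpr; positivity
    refine mul_le_mul_of_nonneg_left (Real.exp_le_exp.mpr ?_) hCpos.le
    rw [ha_def]
    have h2v : (0:ℝ) < 2 * v := by positivity
    have hrhs : -(y - μ)^2 / (2*(v:ℝ)) + (μ - y)/(v:ℝ) * (x - y)
        = (-(y - μ)^2 + 2*(μ - y)*(x - y)) / (2*(v:ℝ)) := by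
      field_simp
    rw [hrhs, div_le_div_iff₀ h2v h2v]
    nlinarith [sq_nonneg (x - y), h2v.le]
  have hint1 : IntegrableOn (gaussianPDFReal μ v) (Set.Iic y) :=
    (integrable_gaussianPDFReal μ v).restrict
  have hint2 : IntegrableOn
      (fun x => gaussianPDFReal μ v y * Real.exp (a * (x - y)))
      (Set.Iic y) := (expIntegrableOn a y ha).const_mul _
  have hpdfy : 0 < gaussianPDFReal μ v y := gaussianPDFReal_pos μ v y (ne_of_gt hv)
  calc ∫ x in Set.Iic y, gaussianPDFReal μ v x
      ≤ ∫ x in Set.Iic y, gaussianPDFReal μ v y * Real.exp (a * (x - y)) :=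
        setIntegral_mono_on hint1 hint2 measurableSet_Iic hbound
    _ = gaussianPDFReal μ v y * (1 / a) := by
        rw [integral_const_mul, expIntegral_Iic a y ha]
    _ ≤ gaussianPDFReal μ v y * v := by
        refine mul_le_mul_of_nonneg_left ?_ hpdfy.le
        rw [ha_def, one_div, inv_div, div_le_iff₀ (by linarith : (0:ℝ) < μ - y)]
        nlinarith

lemma gaussF_lower (μ : ℝ) (v : ℝ≥0) (hv : 0 < v) {y : ℝ} (hy : y ≤ μ) :
    gaussianPDFReal μ v (y - 1) ≤ ∫ x in Set.Iic y, gaussianPDFReal μ v x := by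
  have hint : IntegrableOn (gaussianPDFReal μ v) (Set.Iic y) :=
    (integrable_gaussianPDFReal μ v).restrict
  have h1 : ∫ x in Set.Ioc (y - 1) y, gaussianPDFReal μ v x
      ≤ ∫ x in Set.Iic y, gaussianPDFReal μ v x := by
    refine setIntegral_mono_set hint ?_ ?_
    · exact Filter.Eventually.of_forall (fun x => gaussianPDFReal_nonneg μ v x)
    · exact Filter.Eventually.of_forall (fun x hx => hx.2)
  refine le_trans ?_ h1
  have h2 : ∫ x in Set.Ioc (y - 1) y, gaussianPDFReal μ v (y - 1)
      ≤ ∫ x in Set.Ioc (y - 1) y, gaussianPDFReal μ v x := by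
    refine setIntegral_mono_on ((integrableOn_const_iff (C := gaussianPDFReal μ v (y - 1))).mpr ?_)
      (hint.mono_set (fun x hx => hx.2)) measurableSet_Ioc ?_
    · right; rw [Real.volume_Ioc]; exact ENNReal.ofReal_lt_top
    · intro x hx
      unfold gaussianPDFReal
      have hC : (0:ℝ) < (Real.sqrt (2 * π * v))⁻¹ := by
        rw [inv_pos]
        apply Real.sqrt_pos.mpr
        positivity
      refine mul_le_mul_of_nonneg_left (Real.exp_le_exp.mpr ?_) hC.le
      have hv' : (0:ℝ) < v := hv
      rw [div_le_div_iff_of_pos_right (by positivity)]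
      have h1 : μ - x ≤ μ - (y - 1) := by linarith [hx.1]
      have h2 : 0 ≤ μ - x := by linarith [hx.2]
      nlinarith
  calc gaussianPDFReal μ v (y - 1)
      = ∫ x in Set.Ioc (y - 1) y, gaussianPDFReal μ v (y - 1) := by
        rw [setIntegral_const, Real.volume_real_Ioc]
        norm_num
    _ ≤ _ := h2

lemma gaussF_mono (μ : ℝ) (v : ℝ≥0) {y z : ℝ} (hyz : y ≤ z) :
    ∫ x in Set.Iic y, gaussianPDFReal μ v x ≤ ∫ x in Set.Iic z, gaussianPDFReal μ v x := by
  refine setIntegral_mono_set (integrable_gaussianPDFReal μ v).restrict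
    (Filter.Eventually.of_forall (fun x => gaussianPDFReal_nonneg μ v x))
    (Filter.Eventually.of_forall (fun x hx => le_trans hx hyz))

lemma gaussF_pos (μ : ℝ) (v : ℝ≥0) (hv : 0 < v) (y : ℝ) :
    0 < ∫ x in Set.Iic y, gaussianPDFReal μ v x := by
  have h1 := gaussF_lower μ v hv (min_le_right y μ)
  have h2 := gaussF_mono μ v (min_le_left y μ)
  have h3 := gaussianPDFReal_pos μ v (min y μ - 1) (ne_of_gt hv)
  linarith

lemma aux_tendsto (c d v : ℝ) (hv : 0 < v) :
    Tendsto (fun y : ℝ => (c - (y - d)^2 / (2*v)) / y^2) atBot (𝓝 (-(1/(2*v)))) := by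
  have h0 : Tendsto (fun y : ℝ => y⁻¹) atBot (𝓝 0) := by
    have h := (tendsto_inv_atTop_zero.comp tendsto_neg_atBot_atTop (α := ℝ)).neg
    simp only [neg_zero] at h
    refine h.congr fun y => ?_
    simp [Function.comp, inv_neg]
  have hsq : Tendsto (fun y : ℝ => ((y:ℝ)^2)⁻¹) atBot (𝓝 0) := by
    have := h0.pow 2
    simp only [← inv_pow] at *
    simpa using this
  have main : Tendsto (fun y : ℝ => c * (y^2)⁻¹ - (1 - d * y⁻¹)^2 * (2*v)⁻¹) atBot
      (𝓝 (c * 0 - (1 - d * 0)^2 * (2*v)⁻¹)) := by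
    exact ((hsq.const_mul c).sub
      ((((h0.const_mul d).const_sub 1).pow 2).mul_const (2*v)⁻¹))
  have hval : c * 0 - (1 - d * 0)^2 * (2*v)⁻¹ = -(1/(2*v)) := by norm_num
  rw [hval] at main
  refine main.congr' ?_
  filter_upwards [eventually_lt_atBot (0:ℝ)] with y hy
  have hy0 : y ≠ 0 := ne_of_lt hy
  field_simp

lemma gauss_log_tail (μ : ℝ) (v : ℝ≥0) (hv : 0 < v) :
    Tendsto (fun y : ℝ => Real.log (∫ x in Set.Iic y, gaussianPDFReal μ v x) / y^2)
      atBot (𝓝 (-(1/(2*(v:ℝ))))) := by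
  have hv' : (0:ℝ) < v := hv
  set C : ℝ := (Real.sqrt (2 * π * v))⁻¹ with hC
  have hCpos : 0 < C := by rw [hC, inv_pos]; apply Real.sqrt_pos.mpr; positivity
  have hlow := aux_tendsto (Real.log C) (μ + 1) v hv'
  have hhigh := aux_tendsto (Real.log (C * v)) μ v hv'
  refine tendsto_of_tendsto_of_tendsto_of_le_of_le' hlow hhigh ?_ ?_
  · -- lower bound
    filter_upwards [eventually_le_atBot (min μ (-1))] with y hy
    have hyμ : y ≤ μ := le_trans hy (min_le_left _ _)
    have hy1 : y ≤ -1 := le_trans hy (min_le_right _ _)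
    have hFpos := gaussF_pos μ v hv y
    have hlb := gaussF_lower μ v hv hyμ
    have hpdf : gaussianPDFReal μ v (y - 1) = C * Real.exp (-(y - (μ+1))^2 / (2*v)) := by
      unfold gaussianPDFReal
      rw [← hC]
      congr 1
      ring_nf
    have hlog : Real.log C - (y - (μ+1))^2 / (2*v) ≤ Real.log (∫ x in Set.Iic y, gaussianPDFReal μ v x) := by
      calc Real.log C - (y - (μ+1))^2 / (2*v)
          = Real.log (gaussianPDFReal μ v (y - 1)) := by
            rw [hpdf, Real.log_mul (ne_of_gt hCpos) (ne_of_gt (Real.exp_pos _)), Real.log_exp]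
            ring
        _ ≤ _ := Real.log_le_log (gaussianPDFReal_pos μ v _ (ne_of_gt hv)) hlb
    have hy2 : (0:ℝ) < y^2 := by nlinarith
    exact (div_le_div_iff_of_pos_right hy2).mpr (by linarith)
  · -- upper bound
    filter_upwards [eventually_le_atBot (min (μ - 1) (-1))] with y hy
    have hyμ : y ≤ μ - 1 := le_trans hy (min_le_left _ _)
    have hy1 : y ≤ -1 := le_trans hy (min_le_right _ _)
    have hFpos := gaussF_pos μ v hv y
    have hub := gaussF_upper μ v hv hyμ
    have hpdf : gaussianPDFReal μ v y * v = C * v * Real.exp (-(y - μ)^2 / (2*v)) := by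
      unfold gaussianPDFReal
      rw [← hC]; ring
    have hlog : Real.log (∫ x in Set.Iic y, gaussianPDFReal μ v x)
        ≤ Real.log (C * v) - (y - μ)^2 / (2*v) := by
      calc Real.log (∫ x in Set.Iic y, gaussianPDFReal μ v x)
          ≤ Real.log (gaussianPDFReal μ v y * v) := Real.log_le_log hFpos hub
        _ = Real.log (C * v) - (y - μ)^2 / (2*v) := by
            rw [hpdf, mul_assoc, Real.log_mul (ne_of_gt hCpos) (by positivity),
              Real.log_mul (by positivity) (ne_of_gt (Real.exp_pos _)), Real.log_exp,
              Real.log_mul (ne_of_gt hCpos) (ne_of_gt hv')]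
            ring
    have hy2 : (0:ℝ) < y^2 := by nlinarith
    exact (div_le_div_iff_of_pos_right hy2).mpr (by linarith)

/-- Lower-tail behavior of a sum `S = ∑ H_i` of `k` i.i.d. lognormal random variables
with parameters `μ, σ²`: `log P(S ≤ x)/(log x)² → −k/(2σ²)` as `x → 0⁺`. -/
theorem lognormal_sum_lower_tail {Ω : Type*} [MeasureSpace Ω]
    [IsProbabilityMeasure (ℙ : Measure Ω)]
    (k : ℕ) (hk : 0 < k) (μ : ℝ) (σ2 : ℝ≥0) (hσ2 : 0 < σ2)
    (H : Fin k → Ω → ℝ) (hmeas : ∀ i, Measurable (H i))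
    (hlaw : ∀ i, Measure.map (H i) ℙ = (gaussianReal μ σ2).map Real.exp)
    (hindep : iIndepFun H ℙ) :
    Filter.Tendsto
      (fun x : ℝ => Real.log ((ℙ {ω | ∑ i, H i ω ≤ x}).toReal) / (Real.log x) ^ 2)
      (nhdsWithin 0 (Set.Ioi 0))
      (nhds (-((k : ℝ) / (2 * (σ2 : ℝ))))) := by
  have hv : σ2 ≠ 0 := hσ2.ne'
  have hv' : (0:ℝ) < σ2 := hσ2
  have hk' : (0:ℝ) < k := Nat.cast_pos.mpr hk
  set F : ℝ → ℝ := fun y => ∫ x in Set.Iic y, gaussianPDFReal μ σ2 x with hFdef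
  have hFpos : ∀ y, 0 < F y := fun y => gaussF_pos μ σ2 hσ2 y
  -- law of single coordinate
  have hHx : ∀ i (x : ℝ), 0 < x →
      ℙ (H i ⁻¹' Set.Iic x) = ENNReal.ofReal (F (Real.log x)) := by
    intro i x hx
    rw [← Measure.map_apply (hmeas i) measurableSet_Iic, hlaw i,
      Measure.map_apply Real.measurable_exp measurableSet_Iic]
    have hset : Real.exp ⁻¹' Set.Iic x = Set.Iic (Real.log x) := by
      ext t
      simp only [Set.mem_preimage, Set.mem_Iic]
      exact (Real.le_log_iff_exp_le hx).symm
    rw [hset, gaussianReal_apply_eq_integral μ hv]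
  have hH0 : ∀ i, ℙ (H i ⁻¹' Set.Iic 0) = 0 := by
    intro i
    rw [← Measure.map_apply (hmeas i) measurableSet_Iic, hlaw i,
      Measure.map_apply Real.measurable_exp measurableSet_Iic]
    have hset : Real.exp ⁻¹' Set.Iic (0:ℝ) = ∅ := by
      ext t
      simp only [Set.mem_preimage, Set.mem_Iic, Set.mem_empty_iff_false, iff_false, not_le]
      exact Real.exp_pos t
    simp [hset]
  have hprod : ∀ c : ℝ, ℙ (⋂ i, H i ⁻¹' Set.Iic c) = ∏ i : Fin k, ℙ (H i ⁻¹' Set.Iic c) :=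
    fun c => hindep.meas_iInter (fun i => ⟨Set.Iic c, measurableSet_Iic, rfl⟩)
  -- upper bound
  have hup : ∀ x : ℝ, 0 < x →
      ℙ {ω | ∑ i, H i ω ≤ x} ≤ ENNReal.ofReal (F (Real.log x)) ^ k := by
    intro x hx
    have hsub : {ω | ∑ i, H i ω ≤ x} ⊆
        (⋂ i, H i ⁻¹' Set.Iic x) ∪ ⋃ i, H i ⁻¹' Set.Iic 0 := by
      intro ω hω
      by_cases hneg : ∃ i, H i ω ≤ 0
      · exact Or.inr (Set.mem_iUnion.mpr hneg)
      · push_neg at hneg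
        refine Or.inl (Set.mem_iInter.mpr fun j => ?_)
        have hle : H j ω ≤ ∑ i, H i ω :=
          Finset.single_le_sum (fun i _ => (hneg i).le) (Finset.mem_univ j)
        exact le_trans hle hω
    calc ℙ {ω | ∑ i, H i ω ≤ x}
        ≤ ℙ ((⋂ i, H i ⁻¹' Set.Iic x) ∪ ⋃ i, H i ⁻¹' Set.Iic 0) := measure_mono hsub
      _ ≤ ℙ (⋂ i, H i ⁻¹' Set.Iic x) + ℙ (⋃ i, H i ⁻¹' Set.Iic 0) := measure_union_le _ _
      _ = ℙ (⋂ i, H i ⁻¹' Set.Iic x) := by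
          rw [measure_iUnion_null (fun i => hH0 i), add_zero]
      _ = ENNReal.ofReal (F (Real.log x)) ^ k := by
          rw [hprod x]
          simp [hHx _ x hx, Finset.prod_const]
  -- lower bound
  have hlow : ∀ x : ℝ, 0 < x →
      ENNReal.ofReal (F (Real.log (x / k))) ^ k ≤ ℙ {ω | ∑ i, H i ω ≤ x} := by
    intro x hx
    have hxk : (0:ℝ) < x / k := by positivity
    have hsub : (⋂ i, H i ⁻¹' Set.Iic (x / k)) ⊆ {ω | ∑ i, H i ω ≤ x} := by
      intro ω hω
      simp only [Set.mem_iInter, Set.mem_preimage, Set.mem_Iic] at hω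
      have : ∑ i, H i ω ≤ ∑ _i : Fin k, x / k :=
        Finset.sum_le_sum (fun i _ => hω i)
      simp only [Finset.sum_const, Finset.card_univ, Fintype.card_fin, nsmul_eq_mul] at this
      calc ∑ i, H i ω ≤ (k:ℝ) * (x / k) := this
        _ = x := by field_simp
    calc ENNReal.ofReal (F (Real.log (x / k))) ^ k
        = ℙ (⋂ i, H i ⁻¹' Set.Iic (x / k)) := by
          rw [hprod (x / k)]
          simp [hHx _ _ hxk, Finset.prod_const]
      _ ≤ _ := measure_mono hsub
  -- real-valued bounds
  have hreal : ∀ x : ℝ, 0 < x →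
      F (Real.log x - Real.log k) ^ k ≤ (ℙ {ω | ∑ i, H i ω ≤ x}).toReal ∧
      (ℙ {ω | ∑ i, H i ω ≤ x}).toReal ≤ F (Real.log x) ^ k := by
    intro x hx
    have hfin : ℙ {ω | ∑ i, H i ω ≤ x} ≠ ⊤ := measure_ne_top _ _
    have hlogdiv : Real.log (x / k) = Real.log x - Real.log k :=
      Real.log_div (ne_of_gt hx) (ne_of_gt hk')
    constructor
    · have h1 := ENNReal.toReal_mono hfin (hlow x hx)
      rwa [ENNReal.toReal_pow, ENNReal.toReal_ofReal (hFpos _).le, hlogdiv] at h1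
    · have h2 := ENNReal.toReal_mono (by simp [ENNReal.pow_ne_top, ENNReal.ofReal_ne_top]) (hup x hx)
      rwa [ENNReal.toReal_pow, ENNReal.toReal_ofReal (hFpos _).le] at h2
  -- limits of bounding functions
  have hlog0 : Tendsto Real.log (𝓝[>] (0:ℝ)) atBot := Real.tendsto_log_nhdsGT_zero
  have hTu : Tendsto (fun x : ℝ => (k:ℝ) * (Real.log (F (Real.log x)) / (Real.log x)^2))
      (𝓝[>] (0:ℝ)) (𝓝 (-((k:ℝ) / (2 * (σ2:ℝ))))) := by
    have h1 := (gauss_log_tail μ σ2 hσ2).comp hlog0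
    have h2 := h1.const_mul (k:ℝ)
    have hval : (k:ℝ) * -(1/(2*(σ2:ℝ))) = -((k:ℝ) / (2 * (σ2:ℝ))) := by ring
    rwa [hval] at h2
  have hTl : Tendsto (fun x : ℝ =>
        (k:ℝ) * (Real.log (F (Real.log x - Real.log k)) / (Real.log x)^2))
      (𝓝[>] (0:ℝ)) (𝓝 (-((k:ℝ) / (2 * (σ2:ℝ))))) := by
    set c : ℝ := Real.log k with hc
    have hshift : Tendsto (fun y : ℝ => y - c) atBot atBot :=
      tendsto_atBot_add_const_right _ (-c) tendsto_id
    have h1 := (gauss_log_tail μ σ2 hσ2).comp hshift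
    -- ratio tendsto 1
    have h0 : Tendsto (fun y : ℝ => y⁻¹) atBot (𝓝 0) := by
      have h := (tendsto_inv_atTop_zero.comp tendsto_neg_atBot_atTop (α := ℝ)).neg
      simp only [neg_zero] at h
      refine h.congr fun y => ?_
      simp [Function.comp, inv_neg]
    have h2 : Tendsto (fun y : ℝ => ((y - c)/y)^2) atBot (𝓝 1) := by
      have h3 : Tendsto (fun y : ℝ => (1 - c * y⁻¹)^2) atBot (𝓝 ((1 - c * 0)^2)) :=
        ((h0.const_mul c).const_sub 1).pow 2
      simp only [mul_zero, sub_zero, one_pow] at h3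
      refine h3.congr' ?_
      filter_upwards [eventually_lt_atBot (0:ℝ)] with y hy
      have : y ≠ 0 := ne_of_lt hy
      field_simp
    have h4 : Tendsto (fun y : ℝ => Real.log (F (y - c)) / y^2) atBot
        (𝓝 (-(1/(2*(σ2:ℝ))))) := by
      have h5 := h1.mul h2
      rw [mul_one] at h5
      refine h5.congr' ?_
      filter_upwards [eventually_lt_atBot (min 0 c)] with y hy
      have hy0 : y ≠ 0 := ne_of_lt (lt_of_lt_of_le hy (min_le_left _ _))
      have hyc : y - c ≠ 0 :=
        sub_ne_zero.mpr (ne_of_lt (lt_of_lt_of_le hy (min_le_right _ _)))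
      simp only [Function.comp]
      field_simp
      rfl
    have h6 := (h4.comp hlog0).const_mul (k:ℝ)
    have hval : (k:ℝ) * -(1/(2*(σ2:ℝ))) = -((k:ℝ) / (2 * (σ2:ℝ))) := by ring
    rwa [hval] at h6
  -- squeeze
  refine tendsto_of_tendsto_of_tendsto_of_le_of_le' hTl hTu ?_ ?_
  · filter_upwards [Ioo_mem_nhdsGT_of_mem (Set.left_mem_Ico.mpr one_pos)] with x hx
    have hx0 : (0:ℝ) < x := hx.1
    have hx1 : x < 1 := hx.2
    have hlogneg : Real.log x < 0 := Real.log_neg hx0 hx1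
    have hlogsq : (0:ℝ) < (Real.log x)^2 := by nlinarith
    have hb := (hreal x hx0).1
    have hppos : 0 < (ℙ {ω | ∑ i, H i ω ≤ x}).toReal :=
      lt_of_lt_of_le (pow_pos (hFpos _) k) hb
    have hlog := Real.log_le_log (pow_pos (hFpos _) k) hb
    rw [Real.log_pow] at hlog
    rw [mul_div_assoc']
    exact (div_le_div_iff_of_pos_right hlogsq).mpr hlog
  · filter_upwards [Ioo_mem_nhdsGT_of_mem (Set.left_mem_Ico.mpr one_pos)] with x hx
    have hx0 : (0:ℝ) < x := hx.1
    have hx1 : x < 1 := hx.2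
    have hlogneg : Real.log x < 0 := Real.log_neg hx0 hx1
    have hlogsq : (0:ℝ) < (Real.log x)^2 := by nlinarith
    have hb := (hreal x hx0).2
    have hppos : 0 < (ℙ {ω | ∑ i, H i ω ≤ x}).toReal :=
      lt_of_lt_of_le (pow_pos (hFpos _) k) (hreal x hx0).1
    have hlog := Real.log_le_log hppos hb
    rw [Real.log_pow] at hlog
    rw [mul_div_assoc']
    exact (div_le_div_iff_of_pos_right hlogsq).mpr hlog
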